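/- Let G' be a graph with a dominating set D of size d. In the graph G obtained from G' via Eppstein's construction (upper clique U of size d, independent middle set M of size n with U complete to M, lower cliques L_1,...,L_n each of size n+1 forming one big clique L, and m_i complete to L_j iff v_i dominates v_j in G'), if G' has d pairwise disjoint dominating sets, then there is a partition P of V(G) into connected parts such that G/P is a complete graph on n(n+1)+d vertices. -/

import Mathlib

variable {V W : Type*}

/-- Contraction of a graph by a partition (setoid): two classes are adjacent
iff they are distinct and joined by an edge of `G`. -/
def contractQ (G : SimpleGraph V) (s : Setoid V) : SimpleGraph (Quotient s) where
  Adj x y := x ≠ y ∧ ∃ a b : V, Quotient.mk s a = x ∧ Quotient.mk s b = y ∧ G.Adj a b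
  symm := by
    constructor
    rintro x y ⟨hne, a, b, ha, hb, hab⟩
    exact ⟨hne.symm, b, a, hb, ha, hab.symm⟩
  loopless := by
    constructor
    rintro x ⟨hne, -⟩
    exact hne rfl

/-- The partition of the vertices induced by contracting a set `F` of edges of `G`. -/
def edgeSetoid (G : SimpleGraph V) (F : Set (Sym2 V)) : Setoid V :=
  Relation.EqvGen.setoid (fun a b => G.Adj a b ∧ s(a, b) ∈ F)

/-- The graph `G/F` obtained from `G` by contracting the edges in `F`. -/
def contractE (G : SimpleGraph V) (F : Set (Sym2 V)) :
    SimpleGraph (Quotient (edgeSetoid G F)) := contractQ G (edgeSetoid G F)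

/-- `G` contains an induced copy of `H`. -/
def HasInducedCopy (H : SimpleGraph W) (G : SimpleGraph V) : Prop :=
  ∃ f : W ↪ V, ∀ a b : W, H.Adj a b ↔ G.Adj (f a) (f b)

/-- `G` can be turned into an `H`-free graph by contracting at most `k` of its edges. -/
def ContractsToFree (G : SimpleGraph V) (k : ℕ) (H : SimpleGraph W) : Prop :=
  ∃ F : Finset (Sym2 V), ↑F ⊆ G.edgeSet ∧ F.card ≤ k ∧
    ¬ HasInducedCopy H (contractE G (↑F : Set (Sym2 V)))

/-- The cost of the partition given by a setoid: the sum over classes of (size - 1). -/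
noncomputable def setoidCost (s : Setoid V) : ℕ :=
  ∑ᶠ c : Quotient s, ({v : V | Quotient.mk s v = c}.ncard - 1)

/-- Vertex set of Eppstein's construction: upper clique `U = Fin d`, middle independent
set `M = Fin n`, lower clique `L = Fin n × Fin (n+1)` (split into cliques `L_j`). -/
abbrev EppV (n d : ℕ) := Fin d ⊕ (Fin n ⊕ (Fin n × Fin (n + 1)))

/-- Eppstein's construction from a graph `G'` on `Fin n`: `U` is a clique complete to the
independent set `M`; `L` is a clique; `m_i` is complete to `L_j` iff `v_i` dominates
`v_j`; there are no `U`–`L` edges. -/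
def eppstein {n : ℕ} (G' : SimpleGraph (Fin n)) (d : ℕ) : SimpleGraph (EppV n d) :=
  SimpleGraph.fromRel (fun x y =>
    match x, y with
    | Sum.inl _, Sum.inl _ => True
    | Sum.inl _, Sum.inr (Sum.inl _) => True
    | Sum.inr (Sum.inl i), Sum.inr (Sum.inr (j, _)) => i = j ∨ G'.Adj i j
    | Sum.inr (Sum.inr _), Sum.inr (Sum.inr _) => True
    | _, _ => False)

/-- If `G'` (on `n ≥ 2` vertices, with no universal vertex) has `d` pairwise
disjoint dominating sets, then the graph `G` of Eppstein's construction admits a partition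
`P` of its vertices into connected parts such that `G/P` is a complete graph on
`n(n+1) + d` vertices. -/

lemma connected_of_hub {V : Type*} {G : SimpleGraph V} {S : Set V} (h : V) (hh : h ∈ S)
    (hall : ∀ u ∈ S, u = h ∨ G.Adj u h) : (G.induce S).Connected := by
  rw [SimpleGraph.connected_iff]
  have key : ∀ u : S, (G.induce S).Reachable u ⟨h, hh⟩ := by
    rintro ⟨u, hu⟩
    rcases hall u hu with rfl | hadj
    · rfl
    · exact SimpleGraph.Adj.reachable (by exact hadj)
  exact ⟨fun u w => (key u).trans (key w).symm, ⟨⟨h, hh⟩⟩⟩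

theorem eppstein_contracts_to_complete {n d : ℕ} (hn : 2 ≤ n)
    (G' : SimpleGraph (Fin n))
    (hnouniv : ∀ i : Fin n, ∃ j : Fin n, j ≠ i ∧ ¬ G'.Adj i j)
    (D : Fin d → Finset (Fin n))
    (hdisj : ∀ i j, i ≠ j → Disjoint (D i) (D j))
    (hdom : ∀ m : Fin d, ∀ j : Fin n, ∃ i ∈ D m, i = j ∨ G'.Adj i j) :
    ∃ s : Setoid (EppV n d),
      (∀ v : EppV n d, ((eppstein G' d).induce {u | s.r u v}).Connected) ∧
      Nat.card (Quotient s) = n * (n + 1) + d ∧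
      ∀ x y : Quotient s, x ≠ y → (contractQ (eppstein G' d) s).Adj x y := by
  classical
  set g : EppV n d → Fin d ⊕ (Fin n × Fin (n + 1)) := fun x =>
    match x with
    | Sum.inl m => Sum.inl m
    | Sum.inr (Sum.inl i) =>
        if h : ∃ m, i ∈ D m then Sum.inl h.choose else Sum.inr (i, 0)
    | Sum.inr (Sum.inr p) => Sum.inr p with hg
  set hub : Fin d ⊕ (Fin n × Fin (n + 1)) → EppV n d :=
    Sum.elim Sum.inl (fun p => Sum.inr (Sum.inr p)) with hhub
  have hgh : ∀ c, g (hub c) = c := by rintro (m | p) <;> rfl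
  have hch : ∀ (i : Fin n) (m : Fin d) (hi : i ∈ D m) (h : ∃ m', i ∈ D m'),
      h.choose = m := by
    intro i m hi h
    by_contra hne
    exact (Finset.disjoint_left.1 (hdisj _ _ hne) h.choose_spec) hi
  refine ⟨Setoid.ker g, ?_, ?_, ?_⟩
  · -- connectivity of classes
    intro v
    have hset : {u | (Setoid.ker g).r u v} = {u | g u = g v} := rfl
    rw [hset]
    apply connected_of_hub (hub (g v)) (by simpa using hgh (g v))
    intro u hu
    have hu' : g u = g v := hu
    rw [← hu']
    match u with
    | Sum.inl m => left; rfl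
    | Sum.inr (Sum.inl i) =>
        right
        by_cases h : ∃ m, i ∈ D m
        · have : g (Sum.inr (Sum.inl i)) = Sum.inl h.choose := by simp [hg, h]
          rw [this]
          simp [hhub, eppstein, SimpleGraph.fromRel_adj]
        · have : g (Sum.inr (Sum.inl i)) = Sum.inr (i, 0) := by simp [hg, h]
          rw [this]
          simp [hhub, eppstein, SimpleGraph.fromRel_adj]
    | Sum.inr (Sum.inr p) => left; rfl
  · -- counting
    have hsurj : Function.Surjective g := by
      rintro (m | p)
      · exact ⟨Sum.inl m, rfl⟩
      · exact ⟨Sum.inr (Sum.inr p), rfl⟩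
    rw [Nat.card_congr (Setoid.quotientKerEquivOfSurjective g hsurj)]
    simp [Nat.card_eq_fintype_card]
    ring
  · -- completeness
    rintro x y hxy
    obtain ⟨u, rfl⟩ := Quotient.exists_rep x
    obtain ⟨w, rfl⟩ := Quotient.exists_rep y
    refine ⟨hxy, ?_⟩
    have hgne : g u ≠ g w := fun h => hxy (Quotient.sound h)
    have hmk : ∀ a b : EppV n d, g a = g b →
        Quotient.mk (Setoid.ker g) a = Quotient.mk (Setoid.ker g) b :=
      fun a b h => Quotient.sound h
    match hu : g u, hw : g w with
    | Sum.inl m, Sum.inl m' =>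
        refine ⟨Sum.inl m, Sum.inl m', hmk _ _ (by rw [hu]),
          hmk _ _ (by rw [hw]), ?_⟩
        have : m ≠ m' := by rintro rfl; exact hgne (hu.trans hw.symm)
        simp [eppstein, SimpleGraph.fromRel_adj, this]
    | Sum.inl m, Sum.inr q =>
        obtain ⟨i, hi, hdomi⟩ := hdom m q.1
        have hex : ∃ m', i ∈ D m' := ⟨m, hi⟩
        have hgi : g (Sum.inr (Sum.inl i)) = Sum.inl m := by
          show (if h : ∃ m', i ∈ D m' then Sum.inl h.choose else Sum.inr (i, (0 : Fin (n+1)))) = Sum.inl m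
          rw [dif_pos hex, hch i m hi hex]
        refine ⟨Sum.inr (Sum.inl i), Sum.inr (Sum.inr q),
          hmk _ _ (hgi.trans hu.symm),
          hmk _ _ (by rw [hw]), ?_⟩
        simp [eppstein, SimpleGraph.fromRel_adj]
        exact hdomi
    | Sum.inr q, Sum.inl m =>
        obtain ⟨i, hi, hdomi⟩ := hdom m q.1
        have hex : ∃ m', i ∈ D m' := ⟨m, hi⟩
        refine ⟨Sum.inr (Sum.inr q), Sum.inr (Sum.inl i),
          hmk _ _ (by rw [hu]),
          hmk _ _ ((by
            show (if h : ∃ m', i ∈ D m' then Sum.inl h.choose else Sum.inr (i, (0 : Fin (n+1)))) = Sum.inl m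
            rw [dif_pos hex, hch i m hi hex] : g (Sum.inr (Sum.inl i)) = Sum.inl m).trans hw.symm), ?_⟩
        simp [eppstein, SimpleGraph.fromRel_adj]
        exact hdomi
    | Sum.inr p, Sum.inr q =>
        have hpq : p ≠ q := by rintro rfl; exact hgne (hu.trans hw.symm)
        refine ⟨Sum.inr (Sum.inr p), Sum.inr (Sum.inr q),
          hmk _ _ (by rw [hu]), hmk _ _ (by rw [hw]), ?_⟩
        simp [eppstein, SimpleGraph.fromRel_adj, hpq]
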